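/- Let r ≥ 2 be an integer, let (f, ε) ∈ End(ℂ^r) × ℂ be nonzero, let (w_1,…,w_r) be a basis of ℂ^r with f(w_k) = Σ_j f_{jk} w_j, fix 1 ≤ i ≤ r−1, and let W_i denote the span of w_1,…,w_i. Define μ := −min M, where M := { γ^{(i)}_k − γ^{(i)}_j : j,k ∈ {1,…,r}, f_{jk} ≠ 0 } ∪ { 0 : if ε ≠ 0 }. Then: (i) μ = r if f(W_i) is not contained in W_i; (ii) μ = −r if W_i ⊆ ker f, the image of f is contained in W_i, and ε = 0; (iii) μ = 0 in all other cases. -/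

import Mathlib

/-- Hilbert–Mumford weight for Hitchin pairs: for a nonzero pair `(f, ε)` with
`f ∈ End(ℂ^r)` and `ε ∈ ℂ`, a basis `(w_1,…,w_r)` with matrix entries
`f_{jk} = (w.repr (f(w_k)))_j`, and `1 ≤ i ≤ r−1`, set
`μ = −min({ γ^{(i)}_k − γ^{(i)}_j : f_{jk} ≠ 0 } ∪ { 0 if ε ≠ 0 })`
(0-based indexing of `γ^{(i)}`). Then `μ = r` if `W_i = span(w_1,…,w_i)` is not
`f`-invariant; `μ = −r` if `W_i` is `f`-superinvariant (`W_i ⊆ ker f` and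
`im f ⊆ W_i`) and `ε = 0`; and `μ = 0` in all other cases. -/
theorem hitchin_pair_weight (r : ℕ) (hr : 2 ≤ r)
    (f : (Fin r → ℂ) →ₗ[ℂ] (Fin r → ℂ)) (ε : ℂ) (hfε : ¬ (f = 0 ∧ ε = 0))
    (w : Module.Basis (Fin r) ℂ (Fin r → ℂ))
    (i : ℕ) (hi1 : 1 ≤ i) (hi2 : i ≤ r - 1) :
    let γ : Fin r → ℤ := fun k => if (k : ℕ) < i then (i : ℤ) - r else (i : ℤ)
    let M : Set ℤ :=
      {m | ∃ j k : Fin r, w.repr (f (w k)) j ≠ 0 ∧ γ k - γ j = m} ∪ {m | ε ≠ 0 ∧ m = 0}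
    let W : Submodule ℂ (Fin r → ℂ) := Submodule.span ℂ (⇑w '' {j : Fin r | (j : ℕ) < i})
    let μ : ℤ := -sInf M
    (¬ Submodule.map f W ≤ W → μ = (r : ℤ)) ∧
    ((W ≤ LinearMap.ker f ∧ LinearMap.range f ≤ W ∧ ε = 0) → μ = -(r : ℤ)) ∧
    (Submodule.map f W ≤ W →
      ¬ (W ≤ LinearMap.ker f ∧ LinearMap.range f ≤ W ∧ ε = 0) → μ = 0) := by
  intro γ M W μ
  have hir : i < r := by omega
  -- membership in W via repr support
  have hmemW : ∀ x : Fin r → ℂ, x ∈ W ↔ ∀ j : Fin r, w.repr x j ≠ 0 → (j : ℕ) < i := by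
    intro x
    rw [show W = Submodule.span ℂ (⇑w '' {j : Fin r | (j : ℕ) < i}) from rfl,
      Module.Basis.mem_span_image]
    constructor
    · intro h j hj
      exact h (by simpa [Finsupp.mem_support_iff] using hj)
    · intro h j hj
      exact h j (by simpa [Finsupp.mem_support_iff] using hj)
  have hwk : ∀ k : Fin r, (k : ℕ) < i → w k ∈ W := by
    intro k hk
    exact Submodule.subset_span ⟨k, hk, rfl⟩
  -- invariance characterization
  have hinvchar : Submodule.map f W ≤ W ↔ ∀ k : Fin r, (k : ℕ) < i → f (w k) ∈ W := by
    constructor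
    · intro h k hk
      exact h ⟨w k, hwk k hk, rfl⟩
    · intro h
      rw [show W = Submodule.span ℂ (⇑w '' {j : Fin r | (j : ℕ) < i}) from rfl,
        Submodule.map_span, Submodule.span_le]
      rintro x ⟨y, ⟨k, hk, rfl⟩, rfl⟩
      exact h k hk
  have hlb' : ∀ m ∈ M, -(r : ℤ) ≤ m := by
    rintro m (⟨j, k, hjk, rfl⟩ | ⟨hε, rfl⟩)
    · by_cases hk : (k : ℕ) < i <;> by_cases hj : (j : ℕ) < i <;> simp [γ, hk, hj] <;> omega
    · omega
  have hbdd : BddBelow M := ⟨-(r : ℤ), hlb'⟩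
  refine ⟨?_, ?_, ?_⟩
  · -- not invariant : μ = r
    intro hni
    rw [hinvchar] at hni
    push_neg at hni
    obtain ⟨k, hk, hfk⟩ := hni
    rw [hmemW] at hfk
    push_neg at hfk
    obtain ⟨j, hj, hji⟩ := hfk
    have hmem : (-(r : ℤ)) ∈ M := by
      left
      exact ⟨j, k, hj, by simp [γ, hk, show ¬ (j : ℕ) < i by omega]⟩
    have h1 : sInf M ≤ -(r : ℤ) := csInf_le hbdd hmem
    have h2 : -(r : ℤ) ≤ sInf M := le_csInf ⟨_, hmem⟩ hlb'
    show -sInf M = (r : ℤ)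
    omega
  · -- superinvariant with ε = 0 : μ = -r
    rintro ⟨hker, hrange, hε⟩
    have hf0 : f ≠ 0 := fun h => hfε ⟨h, hε⟩
    have hk0 : ∃ k : Fin r, f (w k) ≠ 0 := by
      by_contra h
      push_neg at h
      exact hf0 (w.ext fun k => by simp [h k])
    obtain ⟨k, hk⟩ := hk0
    have hknotW : ¬ (k : ℕ) < i := fun h => hk (by simpa using hker (hwk k h))
    obtain ⟨j, hj⟩ : ∃ j : Fin r, w.repr (f (w k)) j ≠ 0 := by
      by_contra h
      push_neg at h
      exact hk (by simpa using w.repr.map_eq_zero_iff.mp (Finsupp.ext fun j => h j))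
    have hjlt : (j : ℕ) < i := (hmemW _).mp (hrange ⟨w k, rfl⟩) j hj
    -- every element of M equals r
    have hall : ∀ m ∈ M, m = (r : ℤ) := by
      rintro m (⟨j', k', hjk', rfl⟩ | ⟨hεne, rfl⟩)
      · have hk' : ¬ (k' : ℕ) < i := fun h =>
          hjk' (by simp [show f (w k') = 0 by simpa using hker (hwk k' h)])
        have hj' : (j' : ℕ) < i := (hmemW _).mp (hrange ⟨w k', rfl⟩) j' hjk'
        simp [γ, hk', hj']
      · exact absurd hε hεne
    have hmem : (r : ℤ) ∈ M := by
      left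
      exact ⟨j, k, hj, by simp [γ, hknotW, hjlt]⟩
    have h1 : sInf M ≤ (r : ℤ) := csInf_le hbdd hmem
    have h2 : (r : ℤ) ≤ sInf M := le_csInf ⟨_, hmem⟩ (fun m hm => (hall m hm).ge)
    show -sInf M = -(r : ℤ)
    omega
  · -- invariant, not (superinvariant with ε = 0) : μ = 0
    intro hinv hnot
    have hlb : ∀ m ∈ M, (0 : ℤ) ≤ m := by
      rintro m (⟨j, k, hjk, rfl⟩ | ⟨hεne, rfl⟩)
      · by_cases hk : (k : ℕ) < i <;> by_cases hj : (j : ℕ) < i <;>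
          simp [γ, hk, hj] <;> try omega
        · exact absurd ((hmemW _).mp (hinvchar.mp hinv k hk) j hjk) hj
      · omega
    have hmem : (0 : ℤ) ∈ M := by
      by_cases hε : ε = 0
      · -- f provides a zero weight
        have hmix : (¬ W ≤ LinearMap.ker f) ∨ (¬ LinearMap.range f ≤ W) := by
          by_contra h
          push_neg at h
          exact hnot ⟨h.1, h.2, hε⟩
        rcases hmix with h | h
        · -- some k < i with f (w k) ≠ 0; its support is in {j < i}
          have : ∃ k : Fin r, (k : ℕ) < i ∧ f (w k) ≠ 0 := by
            by_contra hc
            push_neg at hc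
            refine h ?_
            rw [show W = Submodule.span ℂ (⇑w '' {j : Fin r | (j : ℕ) < i}) from rfl,
              Submodule.span_le]
            rintro x ⟨k, hk, rfl⟩
            exact LinearMap.mem_ker.mpr (hc k hk)
          obtain ⟨k, hk, hfk⟩ := this
          obtain ⟨j, hj⟩ : ∃ j : Fin r, w.repr (f (w k)) j ≠ 0 := by
            by_contra hc
            push_neg at hc
            exact hfk (by simpa using w.repr.map_eq_zero_iff.mp (Finsupp.ext fun j => hc j))
          have hjlt : (j : ℕ) < i := (hmemW _).mp (hinvchar.mp hinv k hk) j hj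
          exact Or.inl ⟨j, k, hj, by simp [γ, hk, hjlt]⟩
        · -- some k with f (w k) ∉ W, necessarily k ≥ i, with support component j ≥ i
          have : ∃ k : Fin r, f (w k) ∉ W := by
            by_contra hc
            push_neg at hc
            refine h ?_
            rw [LinearMap.range_eq_map, ← w.span_eq, Submodule.map_span, Submodule.span_le]
            rintro x ⟨y, ⟨k, -, rfl⟩, rfl⟩
            exact hc k
          obtain ⟨k, hk⟩ := this
          have hknot : ¬ (k : ℕ) < i := fun hki => hk (hinvchar.mp hinv k hki)
          rw [hmemW] at hk
          push_neg at hk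
          obtain ⟨j, hj, hjge⟩ := hk
          exact Or.inl ⟨j, k, hj, by simp [γ, hknot, show ¬ (j : ℕ) < i by omega]⟩
      · exact Or.inr ⟨hε, rfl⟩
    have h1 : sInf M ≤ 0 := csInf_le hbdd hmem
    have h2 : (0 : ℤ) ≤ sInf M := le_csInf ⟨_, hmem⟩ hlb
    show -sInf M = 0
    omega
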